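/- Fix an integer N ≥ 2 and c ∈ (0,1)^{2N−1}. Define ξ_1 = c_1 and ξ_n = (1 − c_{n−1}) c_n for 2 ≤ n ≤ 2N−1; then define a_1 = ξ_1, a_n = ξ_{2n−2} + ξ_{2n−1} for 2 ≤ n ≤ N, and b_n = ξ_{2n−1} ξ_{2n} for 1 ≤ n ≤ N−1, and let J = J_{a,b} with eigenvalues x_1,…,x_N (with multiplicity). Then ∏_{n=1}^N x_n = det J = ∏_{n=1}^N c_{2n−1} · ∏_{n=1}^{N−1} (1 − c_{2n}) and ∏_{n=1}^N (1 − x_n) = det(I_N − J) = ∏_{n=1}^{2N−1} (1 − c_n). -/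

import Mathlib

open MeasureTheory ProbabilityTheory Matrix Finset Real
open scoped ENNReal NNReal

noncomputable section

/-- The symmetric tridiagonal (Jacobi) matrix with diagonal `a` and
off-diagonal entries `√(b n)`. -/
def jacobiMatrix {N : ℕ} (a : Fin N → ℝ) (b : Fin (N - 1) → ℝ) :
    Matrix (Fin N) (Fin N) ℝ :=
  Matrix.of fun i j =>
    if i = j then a i
    else if h : (i : ℕ) + 1 = (j : ℕ) then
      Real.sqrt (b ⟨i, by have := j.isLt; omega⟩)
    else if h' : (j : ℕ) + 1 = (i : ℕ) then
      Real.sqrt (b ⟨j, by have := i.isLt; omega⟩)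
    else 0

lemma jacobiMatrix_isHermitian {N : ℕ} (a : Fin N → ℝ) (b : Fin (N - 1) → ℝ) :
    (jacobiMatrix a b).IsHermitian := by
  unfold Matrix.IsHermitian
  ext i j
  simp only [jacobiMatrix, Matrix.conjTranspose_apply, Matrix.of_apply, star_trivial]
  by_cases hij : i = j
  · subst hij; simp
  · have hji : j ≠ i := fun h => hij h.symm
    rw [if_neg hji, if_neg hij]
    by_cases h1 : (j : ℕ) + 1 = (i : ℕ)
    · have h2 : ¬((i : ℕ) + 1 = (j : ℕ)) := by omega
      rw [dif_pos h1, dif_neg h2, dif_pos h1]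
    · by_cases h2 : (i : ℕ) + 1 = (j : ℕ)
      · rw [dif_neg h1, dif_pos h2, dif_pos h2]
      · rw [dif_neg h1, dif_neg h2, dif_neg h2, dif_neg h1]

/-- Reordering of a finite tuple in decreasing order. -/
def sortDesc {N : ℕ} (v : Fin N → ℝ) : Fin N → ℝ :=
  fun i => v (Tuple.sort v (Fin.rev i))

/-- The eigenvalues of the Jacobi matrix `J_{a,b}`, in decreasing order. -/
def jacobiEigs {N : ℕ} (a : Fin N → ℝ) (b : Fin (N - 1) → ℝ) : Fin N → ℝ :=
  sortDesc (jacobiMatrix_isHermitian a b).eigenvalues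

/-- The squared first coordinates of unit eigenvectors of the Jacobi matrix `J_{a,b}`,
indexed compatibly with `jacobiEigs` (decreasing eigenvalue order):
`jacobiWeights hN a b i` is the squared first coordinate of a unit eigenvector
associated with the eigenvalue `jacobiEigs a b i`. -/
def jacobiWeights {N : ℕ} (hN : 0 < N) (a : Fin N → ℝ) (b : Fin (N - 1) → ℝ) :
    Fin N → ℝ :=
  fun i =>
    ((jacobiMatrix_isHermitian a b).eigenvectorBasis
        (Tuple.sort (jacobiMatrix_isHermitian a b).eigenvalues (Fin.rev i)) ⟨0, hN⟩) ^ 2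

/-- The spectral map: Jacobi data `(a, b)` is sent to the decreasingly ordered
eigenvalues together with the first `N - 1` spectral weights. -/
def spectralMap {N : ℕ} (hN : 0 < N) (a : Fin N → ℝ) (b : Fin (N - 1) → ℝ) :
    (Fin N → ℝ) × (Fin (N - 1) → ℝ) :=
  ⟨jacobiEigs a b, fun i => jacobiWeights hN a b ⟨i, by have := i.isLt; omega⟩⟩

/-- The Vandermonde product `∏_{i<j} (x j - x i)`. -/
def vdm {N : ℕ} (x : Fin N → ℝ) : ℝ :=
  ∏ i : Fin N, ∏ j ∈ Finset.Ioi i, (x j - x i)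

/-- The open chamber of decreasing vectors `x 0 > x 1 > … `. -/
def chamber (N : ℕ) : Set (Fin N → ℝ) := {x | ∀ i j : Fin N, i < j → x j < x i}

/-- The open simplex of positive weights with sum `< 1`. -/
def openSimplex (N : ℕ) : Set (Fin (N - 1) → ℝ) :=
  {w | (∀ i, 0 < w i) ∧ ∑ i, w i < 1}

/-- Extension of `N - 1` weights by the last weight `1 - ∑ w`. -/
def wExt {N : ℕ} (w : Fin (N - 1) → ℝ) : Fin N → ℝ :=
  fun n => if h : (n : ℕ) < N - 1 then w ⟨n, h⟩ else 1 - ∑ i, w i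

/-- The first `N` coordinates of a vector of length `2N - 1`. -/
def xPart {N : ℕ} (p : Fin (2 * N - 1) → ℝ) : Fin N → ℝ :=
  fun i => p ⟨i, by have := i.isLt; omega⟩

/-- The last `N - 1` coordinates of a vector of length `2N - 1`. -/
def wPart {N : ℕ} (p : Fin (2 * N - 1) → ℝ) : Fin (N - 1) → ℝ :=
  fun i => p ⟨N + i, by have := i.isLt; omega⟩

/-- The diagonal coefficients `a` built from the parameters `ξ`:
`a 1 = ξ 1`, `a n = ξ (2n-2) + ξ (2n-1)` (in one-based notation). -/
def xiToA {N : ℕ} (ξ : Fin (2 * N - 1) → ℝ) : Fin N → ℝ :=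
  fun n =>
    if h : (n : ℕ) = 0 then ξ ⟨0, by have := n.isLt; omega⟩
    else ξ ⟨2 * (n : ℕ) - 1, by have := n.isLt; omega⟩ +
      ξ ⟨2 * (n : ℕ), by have := n.isLt; omega⟩

/-- The off-diagonal coefficients `b` built from the parameters `ξ`:
`b n = ξ (2n-1) * ξ (2n)` (in one-based notation). -/
def xiToB {N : ℕ} (ξ : Fin (2 * N - 1) → ℝ) : Fin (N - 1) → ℝ :=
  fun n => ξ ⟨2 * (n : ℕ), by have := n.isLt; omega⟩ *
    ξ ⟨2 * (n : ℕ) + 1, by have := n.isLt; omega⟩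

/-- The chain-sequence parameters `ξ` built from canonical moments `c`:
`ξ 1 = c 1` and `ξ n = (1 - c (n-1)) * c n` (in one-based notation). -/
def cToXi {N : ℕ} (c : Fin (2 * N - 1) → ℝ) : Fin (2 * N - 1) → ℝ :=
  fun k =>
    if (k : ℕ) = 0 then c k
    else (1 - c ⟨(k : ℕ) - 1, by have := k.isLt; omega⟩) * c k

/-- The lower bidiagonal matrix `Ξ` with diagonal `√ξ 1, √ξ 3, …` and
subdiagonal `√ξ 2, √ξ 4, …` (in one-based notation). -/
def bidiag {N : ℕ} (ξ : Fin (2 * N - 1) → ℝ) : Matrix (Fin N) (Fin N) ℝ :=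
  Matrix.of fun i j =>
    if i = j then Real.sqrt (ξ ⟨2 * (i : ℕ), by have := i.isLt; omega⟩)
    else if h : (j : ℕ) + 1 = (i : ℕ) then
      Real.sqrt (ξ ⟨2 * (j : ℕ) + 1, by have := i.isLt; omega⟩)
    else 0

lemma mul_transpose_isHermitian {N : ℕ} (A : Matrix (Fin N) (Fin N) ℝ) :
    (A * Aᵀ).IsHermitian := by
  unfold Matrix.IsHermitian
  ext i j
  simp [Matrix.mul_apply, Matrix.conjTranspose_apply, Matrix.transpose_apply, mul_comm]

namespace DetJacAux

def Bmat {N : ℕ} (d e : Fin N → ℝ) : Matrix (Fin N) (Fin N) ℝ :=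
  Matrix.of fun i j => if i = j then d i else if (j : ℕ) + 1 = (i : ℕ) then e j else 0

lemma Bmat_det {N : ℕ} (d e : Fin N → ℝ) : (Bmat d e).det = ∏ i, d i := by
  rw [Matrix.det_of_lowerTriangular (Bmat d e) ?ht]
  · simp [Bmat]
  · intro i j h
    have hij : i < j := h
    simp only [Bmat, Matrix.of_apply]
    rw [if_neg (by exact fun hh => absurd hh (ne_of_lt hij)), if_neg (by omega)]

lemma Bmat_mul_transpose_apply {N : ℕ} (d e : Fin N → ℝ) (i j : Fin N) :
    (Bmat d e * (Bmat d e)ᵀ) i j =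
      if i = j then
        d i ^ 2 + (if h : 0 < (i : ℕ) then e ⟨(i : ℕ) - 1, by have := i.isLt; omega⟩ ^ 2 else 0)
      else if (i : ℕ) + 1 = (j : ℕ) then d i * e i
      else if (j : ℕ) + 1 = (i : ℕ) then d j * e j
      else 0 := by
  rw [Matrix.mul_apply]
  simp only [Matrix.transpose_apply, Bmat, Matrix.of_apply]
  by_cases hij : i = j
  · subst hij
    rw [if_pos rfl]
    by_cases h0 : 0 < (i : ℕ)
    · rw [dif_pos h0]
      set i' : Fin N := ⟨(i : ℕ) - 1, by have := i.isLt; omega⟩ with hi'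
      have hvi' : (i' : ℕ) = (i : ℕ) - 1 := rfl
      have hne : i' ≠ i := by rw [Ne, Fin.ext_iff, hvi']; omega
      rw [← Finset.sum_subset (Finset.subset_univ {i', i}) ?hz, Finset.sum_pair hne]
      · rw [if_neg (fun h => hne h.symm), if_pos (by rw [hvi']; omega), if_pos rfl]
        ring
      · intro k _ hk
        simp only [Finset.mem_insert, Finset.mem_singleton, not_or] at hk
        rw [if_neg (fun h => hk.2 h.symm),
          if_neg (fun hki => hk.1 (Fin.val_injective (by rw [hvi']; omega))), zero_mul]
    · rw [dif_neg h0]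
      rw [Finset.sum_eq_single i]
      · rw [if_pos rfl]; ring
      · intro k _ hk
        rw [if_neg (fun h => hk h.symm), if_neg (by omega), zero_mul]
      · simp
  · rw [if_neg hij]
    by_cases hadj : (i : ℕ) + 1 = (j : ℕ)
    · rw [if_pos hadj, Finset.sum_eq_single i]
      · rw [if_pos rfl, if_neg (fun h => hij h.symm), if_pos (by omega)]
      · intro k _ hk
        by_cases hki : (k : ℕ) + 1 = (i : ℕ)
        · rw [if_neg (fun h => hk (by rw [h])), if_pos hki,
            if_neg (fun h : j = k => by rw [Fin.ext_iff] at h; omega),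
            if_neg (by omega), mul_zero]
        · rw [if_neg (fun h => hk (by rw [h])), if_neg hki, zero_mul]
      · simp
    · rw [if_neg hadj]
      by_cases hadj' : (j : ℕ) + 1 = (i : ℕ)
      · rw [if_pos hadj', Finset.sum_eq_single j]
        · rw [if_neg hij, if_pos hadj', if_pos rfl]; ring
        · intro k _ hk
          by_cases h1 : i = k
          · subst h1
            rw [if_pos rfl, if_neg (fun h : j = i => hij h.symm),
              if_neg (fun h : (i : ℕ) + 1 = (j : ℕ) => hadj h), mul_zero]
          · by_cases hki : (k : ℕ) + 1 = (i : ℕ)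
            · exact (hk (Fin.val_injective (by omega))).elim
            · rw [if_neg h1, if_neg hki, zero_mul]
        · simp
      · rw [if_neg hadj']
        apply Finset.sum_eq_zero
        intro k _
        by_cases h1 : i = k
        · rw [if_pos h1, if_neg (fun h : j = k => hij (by rw [h1, h])),
            if_neg (fun h => hadj' (by rw [Fin.ext_iff] at h1; omega)), mul_zero]
        · by_cases h2 : (k : ℕ) + 1 = (i : ℕ)
          · rw [if_neg h1, if_pos h2,
              if_neg (fun h : j = k => hadj (by rw [Fin.ext_iff] at h; omega)),
              if_neg (fun h => hij (Fin.val_injective (by omega))), mul_zero]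
          · rw [if_neg h1, if_neg h2, zero_mul]


/-- determinant of `1 - A` for a Hermitian real matrix. -/
lemma det_one_sub_eig {n : ℕ} {A : Matrix (Fin n) (Fin n) ℝ} (hA : A.IsHermitian) :
    (1 - A).det = ∏ i, (1 - hA.eigenvalues i) := by
  have hU := Matrix.mem_unitaryGroup_iff.mp hA.eigenvectorUnitary.2
  have hdecomp : (1 : Matrix (Fin n) (Fin n) ℝ) - A =
      (hA.eigenvectorUnitary : Matrix (Fin n) (Fin n) ℝ) *
        (1 - Matrix.diagonal (RCLike.ofReal ∘ hA.eigenvalues)) *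
        (star (hA.eigenvectorUnitary : Matrix (Fin n) (Fin n) ℝ)) := by
    rw [Matrix.mul_sub, Matrix.sub_mul, Matrix.mul_one, hU, ← Unitary.conjStarAlgAut_apply (S := ℝ), ← hA.spectral_theorem]
  have hdd : (1 : Matrix (Fin n) (Fin n) ℝ) - Matrix.diagonal (RCLike.ofReal ∘ hA.eigenvalues)
      = Matrix.diagonal (fun i => 1 - hA.eigenvalues i) := by
    rw [← Matrix.diagonal_one, ← Matrix.diagonal_sub]
    rfl
  rw [hdecomp, Matrix.det_mul_right_comm, hU, Matrix.one_mul, hdd, Matrix.det_diagonal]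

/-- Extension of a `Fin`-indexed function to `ℕ` by zero. -/
def nxt {M : ℕ} (c : Fin M → ℝ) : ℕ → ℝ := fun m => if h : m < M then c ⟨m, h⟩ else 0

lemma nxt_eq {M : ℕ} (c : Fin M → ℝ) (m : ℕ) (h : m < M) : c ⟨m, h⟩ = nxt c m := by
  simp [nxt, h]

lemma nxt_coe {M : ℕ} (c : Fin M → ℝ) (k : Fin M) : c k = nxt c (k : ℕ) := by
  rw [← nxt_eq c (k : ℕ) k.isLt]

lemma nxt_nonneg {M : ℕ} {c : Fin M → ℝ} (h : ∀ k, 0 ≤ c k) (m : ℕ) : 0 ≤ nxt c m := by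
  unfold nxt; split
  · exact h _
  · exact le_refl 0

/-- index-congruence helper. -/
lemma fcongr {m : ℕ} (f : Fin m → ℝ) {a b : ℕ} (ha : a < m) (hb : b < m) (h : a = b) :
    f ⟨a, ha⟩ = f ⟨b, hb⟩ := by subst h; rfl

lemma nxt_cToXi {N : ℕ} (hN : 1 ≤ N) (c : Fin (2 * N - 1) → ℝ) (m : ℕ) :
    nxt (cToXi c) m = if m = 0 then nxt c 0 else (1 - nxt c (m - 1)) * nxt c m := by
  by_cases hm : m < 2 * N - 1
  · by_cases h0 : m = 0
    · subst h0
      simp [nxt, cToXi, hm]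
    · simp [nxt, cToXi, hm, h0]
      exact Or.inl (by intro h; omega)
  · have hm' : ¬ m = 0 := by omega
    simp [nxt, hm, hm']

lemma jacobi_factor {N : ℕ} (ξ : Fin (2 * N - 1) → ℝ) (hξ : ∀ k, 0 ≤ ξ k) :
    jacobiMatrix (xiToA ξ) (xiToB ξ) =
      Bmat (fun i : Fin N => Real.sqrt (nxt ξ (2 * (i : ℕ))))
          (fun j : Fin N => Real.sqrt (nxt ξ (2 * (j : ℕ) + 1))) *
        (Bmat (fun i : Fin N => Real.sqrt (nxt ξ (2 * (i : ℕ))))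
          (fun j : Fin N => Real.sqrt (nxt ξ (2 * (j : ℕ) + 1))))ᵀ := by
  have hξ' : ∀ m, 0 ≤ nxt ξ m := nxt_nonneg hξ
  ext i j
  rw [Bmat_mul_transpose_apply]
  simp only [jacobiMatrix, Matrix.of_apply, xiToA, xiToB]
  by_cases hij : i = j
  · subst hij
    rw [if_pos rfl, if_pos rfl]
    by_cases h0 : (i : ℕ) = 0
    · rw [dif_pos h0, dif_neg (by omega), add_zero, Real.sq_sqrt (hξ' _),
        nxt_eq ξ, h0, mul_zero]
    · rw [dif_neg h0, dif_pos (by omega), Real.sq_sqrt (hξ' _), Real.sq_sqrt (hξ' _),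
        nxt_eq ξ, nxt_eq ξ]
      rw [show 2 * ((⟨(i : ℕ) - 1, by have := i.isLt; omega⟩ : Fin N) : ℕ) + 1
            = 2 * (i : ℕ) - 1 from by simp; omega]
      ring
  · rw [if_neg hij, if_neg hij]
    by_cases hadj : (i : ℕ) + 1 = (j : ℕ)
    · rw [dif_pos hadj, if_pos hadj, ← Real.sqrt_mul (hξ' _), nxt_eq ξ, nxt_eq ξ]
    · rw [dif_neg hadj, if_neg hadj]
      by_cases hadj' : (j : ℕ) + 1 = (i : ℕ)
      · rw [dif_pos hadj', if_pos hadj', ← Real.sqrt_mul (hξ' _), nxt_eq ξ, nxt_eq ξ]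
      · rw [dif_neg hadj', if_neg hadj']

lemma one_sub_jacobi_factor {N : ℕ} (hN : 1 ≤ N) (c : Fin (2 * N - 1) → ℝ)
    (hc : ∀ i, c i ∈ Set.Ioo (0 : ℝ) 1) :
    (1 : Matrix (Fin N) (Fin N) ℝ) - jacobiMatrix (xiToA (cToXi c)) (xiToB (cToXi c)) =
      Bmat (fun i : Fin N => if (i : ℕ) = 0 then Real.sqrt (1 - nxt c 0)
              else Real.sqrt ((1 - nxt c (2 * (i : ℕ) - 1)) * (1 - nxt c (2 * (i : ℕ)))))
          (fun j : Fin N => -Real.sqrt (nxt c (2 * (j : ℕ)) * nxt c (2 * (j : ℕ) + 1))) *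
        (Bmat (fun i : Fin N => if (i : ℕ) = 0 then Real.sqrt (1 - nxt c 0)
              else Real.sqrt ((1 - nxt c (2 * (i : ℕ) - 1)) * (1 - nxt c (2 * (i : ℕ)))))
          (fun j : Fin N => -Real.sqrt (nxt c (2 * (j : ℕ)) * nxt c (2 * (j : ℕ) + 1))))ᵀ := by
  have h0c : ∀ m, 0 ≤ nxt c m := nxt_nonneg (fun k => (hc k).1.le)
  have h1c : ∀ m, 0 ≤ 1 - nxt c m := by
    intro m
    by_cases h : m < 2 * N - 1
    · rw [nxt, dif_pos h]; linarith [(hc ⟨m, h⟩).2]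
    · rw [nxt, dif_neg h]; norm_num
  ext i j
  rw [Matrix.sub_apply, Matrix.one_apply, Bmat_mul_transpose_apply]
  simp only [jacobiMatrix, Matrix.of_apply, xiToA, xiToB, nxt_eq (cToXi c), nxt_cToXi hN c]
  by_cases hij : i = j
  · subst hij
    rw [if_pos rfl, if_pos rfl, if_pos rfl]
    by_cases h0 : (i : ℕ) = 0
    · rw [dif_pos h0, if_pos h0, dif_neg (by omega), add_zero, Real.sq_sqrt (h1c 0)]
      norm_num
    · rw [dif_neg h0, if_neg h0, dif_pos (by omega),
        Real.sq_sqrt (mul_nonneg (h1c _) (h1c _)), neg_sq,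
        Real.sq_sqrt (mul_nonneg (h0c _) (h0c _)),
        if_neg (show ¬(2 * (i : ℕ) - 1 = 0) by omega),
        if_neg (show ¬(2 * (i : ℕ) = 0) by omega)]
      rw [show 2 * ((i : ℕ) - 1) = 2 * (i : ℕ) - 1 - 1 by omega,
        show 2 * (i : ℕ) - 1 - 1 + 1 = 2 * (i : ℕ) - 1 by omega]
      ring
  · rw [if_neg hij, if_neg hij, if_neg hij]
    by_cases hadj : (i : ℕ) + 1 = (j : ℕ)
    · rw [dif_pos hadj, if_pos hadj, zero_sub, mul_neg, neg_inj,
        if_neg (show ¬(2 * (i : ℕ) + 1 = 0) by omega),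
        show 2 * (i : ℕ) + 1 - 1 = 2 * (i : ℕ) from by omega]
      by_cases h0 : (i : ℕ) = 0
      · rw [if_pos h0, if_pos (show 2 * (i : ℕ) = 0 by omega),
          ← Real.sqrt_mul (h1c 0), h0]
        congr 1
        ring
      · rw [if_neg h0, if_neg (show ¬(2 * (i : ℕ) = 0) by omega),
          ← Real.sqrt_mul (mul_nonneg (h1c _) (h1c _))]
        congr 1
        ring
    · rw [dif_neg hadj, if_neg hadj]
      by_cases hadj' : (j : ℕ) + 1 = (i : ℕ)
      · rw [dif_pos hadj', if_pos hadj', zero_sub, mul_neg, neg_inj,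
          if_neg (show ¬(2 * (j : ℕ) + 1 = 0) by omega),
          show 2 * (j : ℕ) + 1 - 1 = 2 * (j : ℕ) from by omega]
        by_cases h0 : (j : ℕ) = 0
        · rw [if_pos h0, if_pos (show 2 * (j : ℕ) = 0 by omega),
            ← Real.sqrt_mul (h1c 0), h0]
          congr 1
          ring
        · rw [if_neg h0, if_neg (show ¬(2 * (j : ℕ) = 0) by omega),
            ← Real.sqrt_mul (mul_nonneg (h1c _) (h1c _))]
          congr 1
          ring
      · rw [dif_neg hadj', if_neg hadj', sub_zero]

lemma prod_pairing (f : ℕ → ℝ) (M : ℕ) :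
    ∏ m ∈ Finset.range (2 * M + 1), f m
      = f 0 * ∏ i ∈ Finset.range M, (f (2 * i + 1) * f (2 * i + 2)) := by
  induction M with
  | zero => simp
  | succ M ih =>
    rw [show 2 * (M + 1) + 1 = (2 * M + 1) + 1 + 1 from by ring,
      Finset.prod_range_succ, Finset.prod_range_succ, ih, Finset.prod_range_succ,
      show 2 * M + 1 + 1 = 2 * M + 2 from by omega]
    ring

lemma det_jacobi {N : ℕ} (ξ : Fin (2 * N - 1) → ℝ) (hξ : ∀ k, 0 ≤ ξ k) :
    (jacobiMatrix (xiToA ξ) (xiToB ξ)).det = ∏ m ∈ Finset.range N, nxt ξ (2 * m) := by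
  rw [jacobi_factor ξ hξ, Matrix.det_mul, Matrix.det_transpose, Bmat_det,
    ← Finset.prod_mul_distrib, ← Fin.prod_univ_eq_prod_range (fun m => nxt ξ (2 * m)) N]
  exact Finset.prod_congr rfl fun i _ => Real.mul_self_sqrt (nxt_nonneg hξ _)

lemma det_one_sub_jacobi {N : ℕ} (hN : 1 ≤ N) (c : Fin (2 * N - 1) → ℝ)
    (hc : ∀ i, c i ∈ Set.Ioo (0 : ℝ) 1) :
    ((1 : Matrix (Fin N) (Fin N) ℝ) - jacobiMatrix (xiToA (cToXi c)) (xiToB (cToXi c))).det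
      = ∏ i, (1 - c i) := by
  have h0c : ∀ m, 0 ≤ nxt c m := nxt_nonneg (fun k => (hc k).1.le)
  have h1c : ∀ m, 0 ≤ 1 - nxt c m := by
    intro m
    by_cases h : m < 2 * N - 1
    · rw [nxt, dif_pos h]; linarith [(hc ⟨m, h⟩).2]
    · rw [nxt, dif_neg h]; norm_num
  rw [one_sub_jacobi_factor hN c hc, Matrix.det_mul, Matrix.det_transpose, Bmat_det,
    ← Finset.prod_mul_distrib]
  have hD : ∏ i : Fin N,
      ((if (i : ℕ) = 0 then Real.sqrt (1 - nxt c 0)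
          else Real.sqrt ((1 - nxt c (2 * (i : ℕ) - 1)) * (1 - nxt c (2 * (i : ℕ))))) *
        (if (i : ℕ) = 0 then Real.sqrt (1 - nxt c 0)
          else Real.sqrt ((1 - nxt c (2 * (i : ℕ) - 1)) * (1 - nxt c (2 * (i : ℕ))))))
      = ∏ m ∈ Finset.range N, (fun m => if m = 0 then 1 - nxt c 0
          else (1 - nxt c (2 * m - 1)) * (1 - nxt c (2 * m))) m := by
    rw [← Fin.prod_univ_eq_prod_range]
    refine Finset.prod_congr rfl fun i _ => ?_
    by_cases h0 : (i : ℕ) = 0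
    · rw [if_pos h0, Real.mul_self_sqrt (h1c 0), if_pos h0]
    · rw [if_neg h0, Real.mul_self_sqrt (mul_nonneg (h1c _) (h1c _)), if_neg h0]
  rw [hD]
  have hfin : ∏ i : Fin (2 * N - 1), (1 - c i)
      = ∏ m ∈ Finset.range (2 * N - 1), (1 - nxt c m) := by
    rw [← Fin.prod_univ_eq_prod_range (fun m => 1 - nxt c m)]
    exact Finset.prod_congr rfl fun k _ => by rw [nxt_coe c k]
  rw [hfin,
    show Finset.range (2 * N - 1) = Finset.range (2 * (N - 1) + 1) from by congr 1; omega,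
    prod_pairing (fun m => 1 - nxt c m) (N - 1),
    show Finset.range N = Finset.range ((N - 1) + 1) from by congr 1; omega,
    Finset.prod_range_succ', mul_comm]
  rw [if_pos rfl]
  refine congrArg (fun z => (1 - nxt c 0) * z) ?_
  exact Finset.prod_congr rfl fun i _ => by
    rw [if_neg (by omega), show 2 * (i + 1) - 1 = 2 * i + 1 from by omega,
      show 2 * (i + 1) = 2 * i + 2 from by omega]

end DetJacAux

open DetJacAux in
/-- determinants of `J` and `I - J` in terms of canonical moments. -/
theorem det_jacobi_canonical_moments (N : ℕ) (hN : 2 ≤ N)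
    (c : Fin (2 * N - 1) → ℝ) (hc : ∀ i, c i ∈ Set.Ioo (0 : ℝ) 1) :
    (∏ n, (jacobiMatrix_isHermitian (xiToA (cToXi c)) (xiToB (cToXi c))).eigenvalues n
        = (jacobiMatrix (xiToA (cToXi c)) (xiToB (cToXi c))).det) ∧
    ((jacobiMatrix (xiToA (cToXi c)) (xiToB (cToXi c))).det
        = (∏ n : Fin N, c ⟨2 * (n : ℕ), by have := n.isLt; omega⟩) *
          ∏ n : Fin (N - 1), (1 - c ⟨2 * (n : ℕ) + 1, by have := n.isLt; omega⟩)) ∧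
    (∏ n, (1 - (jacobiMatrix_isHermitian (xiToA (cToXi c)) (xiToB (cToXi c))).eigenvalues n)
        = (1 - jacobiMatrix (xiToA (cToXi c)) (xiToB (cToXi c))).det) ∧
    ((1 - jacobiMatrix (xiToA (cToXi c)) (xiToB (cToXi c))).det
        = ∏ i, (1 - c i)) := by
  have hN1 : 1 ≤ N := by omega
  have hξ : ∀ k, 0 ≤ cToXi c k := by
    intro k
    unfold cToXi
    split
    · exact (hc k).1.le
    · exact mul_nonneg
        (by linarith [(hc ⟨(k : ℕ) - 1, by have := k.isLt; omega⟩).2]) (hc k).1.le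
  refine ⟨?_, ?_, ?_, ?_⟩
  · rw [(jacobiMatrix_isHermitian (xiToA (cToXi c)) (xiToB (cToXi c))).det_eq_prod_eigenvalues]
    norm_num
  · rw [det_jacobi (cToXi c) hξ]
    have h1 : (∏ n : Fin N, c ⟨2 * (n : ℕ), by have := n.isLt; omega⟩)
        = ∏ m ∈ Finset.range N, nxt c (2 * m) := by
      rw [← Fin.prod_univ_eq_prod_range (fun m => nxt c (2 * m)) N]
      exact Finset.prod_congr rfl fun n _ => nxt_eq c _ _
    have h2 : (∏ n : Fin (N - 1), (1 - c ⟨2 * (n : ℕ) + 1, by have := n.isLt; omega⟩))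
        = ∏ m ∈ Finset.range (N - 1), (1 - nxt c (2 * m + 1)) := by
      rw [← Fin.prod_univ_eq_prod_range (fun m => 1 - nxt c (2 * m + 1)) (N - 1)]
      exact Finset.prod_congr rfl fun n _ => by rw [nxt_eq c]
    rw [h1, h2,
      show Finset.range N = Finset.range ((N - 1) + 1) from by congr 1; omega,
      Finset.prod_range_succ' (fun m => nxt (cToXi c) (2 * m)),
      Finset.prod_range_succ' (fun m => nxt c (2 * m))]
    have e0 : nxt (cToXi c) (2 * 0) = nxt c 0 := by
      rw [nxt_cToXi hN1 c]; norm_num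
    have e1 : ∀ i : ℕ, nxt (cToXi c) (2 * (i + 1))
        = (1 - nxt c (2 * i + 1)) * nxt c (2 * (i + 1)) := by
      intro i
      rw [nxt_cToXi hN1 c, if_neg (by omega),
        show 2 * (i + 1) - 1 = 2 * i + 1 from by omega]
    rw [e0, Finset.prod_congr rfl (fun i _ => e1 i), Finset.prod_mul_distrib]
    ring
  · exact (det_one_sub_eig (jacobiMatrix_isHermitian _ _)).symm
  · exact det_one_sub_jacobi hN1 c hc
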